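/- Conversely, suppose G ∈ GL(3,ℝ) has det G > 0 and satisfies r(Gᵀ·C·G) = r(C) and det(Gᵀ·C·G) = det(C) for every symmetric positive-definite 3×3 real matrix C, where r(C) = C₂₂C₃₃ − C₂₃C₃₂. Then det G = 1 and the first row of G is either (1,0,0) or (−1,0,0). -/

import Mathlib

open Matrix

/-- `r C = C₂₂C₃₃ − C₂₃C₃₂`, the (1,1) cofactor of a 3×3 matrix (0-based indices). -/
def rInv (C : Matrix (Fin 3) (Fin 3) ℝ) : ℝ := C 1 1 * C 2 2 - C 1 2 * C 2 1

/-- If `G ∈ GL(3,ℝ)` has positive determinant and preserves both `r` and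
`det` under congruence for every symmetric positive-definite `C`, then `det G = 1` and
the first row of `G` is `(1,0,0)` or `(−1,0,0)`. -/
theorem K1_converse (G : GL (Fin 3) ℝ)
    (hdet : 0 < Matrix.det (G : Matrix (Fin 3) (Fin 3) ℝ))
    (h : ∀ C : Matrix (Fin 3) (Fin 3) ℝ, C.IsSymm → C.PosDef →
      rInv ((G : Matrix (Fin 3) (Fin 3) ℝ)ᵀ * C * G) = rInv C ∧
      ((G : Matrix (Fin 3) (Fin 3) ℝ)ᵀ * C * G).det = C.det) :
    Matrix.det (G : Matrix (Fin 3) (Fin 3) ℝ) = 1 ∧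
    ((G : Matrix (Fin 3) (Fin 3) ℝ) 0 = ![1, 0, 0] ∨
     (G : Matrix (Fin 3) (Fin 3) ℝ) 0 = ![-1, 0, 0]) := by
  have h1 := h 1 (by simp [Matrix.IsSymm]) Matrix.PosDef.one
  have h2 := h (Matrix.diagonal ![1/2, 1, 1]) (Matrix.isSymm_diagonal _)
    (Matrix.PosDef.diagonal (by intro i; fin_cases i <;> norm_num))
  -- determinant = 1
  have hd1 : Matrix.det (G : Matrix (Fin 3) (Fin 3) ℝ) = 1 := by
    have := h1.2
    rw [Matrix.det_mul, Matrix.det_mul, Matrix.det_transpose, Matrix.det_one] at this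
    nlinarith
  refine ⟨hd1, ?_⟩
  have e1 := h1.1
  have e2 := h2.1
  simp only [rInv, Matrix.mul_apply, Matrix.transpose_apply, Fin.sum_univ_three,
    Matrix.one_apply, Matrix.diagonal_apply, show (2:Fin 3) ≠ 0 by decide,
    show (2:Fin 3) ≠ 1 by decide, show (0:Fin 3) ≠ 2 by decide,
    show (1:Fin 3) ≠ 2 by decide, if_false, if_true,
    Matrix.cons_val_zero, Matrix.cons_val_one, Matrix.head_cons] at e1 e2
  norm_num at e1 e2
  rw [Matrix.det_fin_three] at hd1
  set a00 := (G : Matrix (Fin 3) (Fin 3) ℝ) 0 0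
  set a01 := (G : Matrix (Fin 3) (Fin 3) ℝ) 0 1
  set a02 := (G : Matrix (Fin 3) (Fin 3) ℝ) 0 2
  set a10 := (G : Matrix (Fin 3) (Fin 3) ℝ) 1 0
  set a11 := (G : Matrix (Fin 3) (Fin 3) ℝ) 1 1
  set a12 := (G : Matrix (Fin 3) (Fin 3) ℝ) 1 2
  set a20 := (G : Matrix (Fin 3) (Fin 3) ℝ) 2 0
  set a21 := (G : Matrix (Fin 3) (Fin 3) ℝ) 2 1
  set a22 := (G : Matrix (Fin 3) (Fin 3) ℝ) 2 2
  set m01 : ℝ := a01 * a12 - a11 * a02 with hm01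
  set m02 : ℝ := a01 * a22 - a21 * a02 with hm02
  set m12 : ℝ := a11 * a22 - a21 * a12 with hm12
  have E1 : m01 ^ 2 + m02 ^ 2 + m12 ^ 2 = 1 := by
    rw [hm01, hm02, hm12]; linear_combination e1
  have E2 : (1/2) * (m01 ^ 2 + m02 ^ 2) + m12 ^ 2 = 1 := by
    rw [hm01, hm02, hm12]; rw [show (![1/2, 1, 1] : Fin 3 → ℝ) 2 = 1 from rfl] at e2; linear_combination e2
  have hs : m01 ^ 2 + m02 ^ 2 = 0 := by linear_combination 2*E1 - 2*E2
  have h01 : m01 = 0 := by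
    have h' : m01 ^ 2 = 0 :=
      le_antisymm (by linarith [sq_nonneg m02]) (sq_nonneg m01)
    exact pow_eq_zero_iff (by norm_num) |>.mp h'
  have h02 : m02 = 0 := by
    have h' : m02 ^ 2 = 0 :=
      le_antisymm (by linarith [sq_nonneg m01]) (sq_nonneg m02)
    exact pow_eq_zero_iff (by norm_num) |>.mp h'
  have hm : m12 ^ 2 = 1 := by linear_combination E1 - hs
  -- determinant expansion along the first column, using m01 = m02 = 0
  have hdetexp : a00 * m12 = 1 := by
    rw [hm12]; linear_combination hd1 + a10 * h02 - a20 * h01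
  have hz01 : a01 * m12 = 0 := by
    rw [hm12]; linear_combination a11 * h02 - a21 * h01
  have hz02 : a02 * m12 = 0 := by
    rw [hm12]; linear_combination a12 * h02 - a22 * h01
  have hcase : m12 = 1 ∨ m12 = -1 :=
    mul_self_eq_one_iff.mp (by linear_combination hm)
  rcases hcase with hc | hc <;> rw [hc] at hdetexp hz01 hz02
  · left
    have ha00 : a00 = 1 := by linarith
    have ha01 : a01 = 0 := by linarith
    have ha02 : a02 = 0 := by linarith
    funext j; fin_cases j
    · exact ha00
    · exact ha01
    · exact ha02
  · right
    have ha00 : a00 = -1 := by linarith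
    have ha01 : a01 = 0 := by linarith
    have ha02 : a02 = 0 := by linarith
    funext j; fin_cases j
    · exact ha00
    · exact ha01
    · exact ha02
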